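/- Let A = {a_1,…,a_p} be a finite subset of ℕ^m, where a_i = (a_{i1},…,a_{im}) for i = 1,…,p. For 0 ≤ ℓ ≤ p let Λ(ℓ,p) denote the set of all ℓ-element subsets of {1,…,p}, and for λ ∈ Λ(ℓ,p) let b_λ = Σ_{j=1}^m max{a_{ij} : i ∈ λ}. Then the Kolchin dimension polynomial of A is ω_A(t) = Σ_{ℓ=0}^p (−1)^ℓ Σ_{λ∈Λ(ℓ,p)} C(t + m − b_λ, m). -/

import Mathlib

set_option maxHeartbeats 1000000
set_option synthInstance.maxHeartbeats 1000000
set_option linter.unusedSectionVars false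

noncomputable section

variable (K : Type*) [Field K] [CharZero K]

/-! ### Numerical polynomials -/

/-- A polynomial `f ∈ ℚ[t]` is numerical if `f(s) ∈ ℤ` for all sufficiently large `s ∈ ℕ`. -/
def Numerical (f : Polynomial ℚ) : Prop :=
  ∃ N : ℕ, ∀ s : ℕ, N ≤ s → ∃ z : ℤ, f.eval (s : ℚ) = (z : ℚ)

/-- The binomial polynomial `C(t+i, i) = (t+1)(t+2)⋯(t+i)/i!`. -/
def binomPoly (i : ℕ) : Polynomial ℚ :=
  (i.factorial : ℚ)⁻¹ • ∏ k ∈ Finset.range i, (Polynomial.X + Polynomial.C ((k : ℚ) + 1))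

/-- The generalized binomial polynomial `C(t+c, m) = (t+c)(t+c-1)⋯(t+c-m+1)/m!` for `c ∈ ℤ`. -/
def genBinomPoly (c : ℤ) (m : ℕ) : Polynomial ℚ :=
  (m.factorial : ℚ)⁻¹ • ∏ k ∈ Finset.range m, (Polynomial.X + Polynomial.C ((c : ℚ) - (k : ℚ)))

/-! ### The Weyl algebra as a ring of operators -/

/-- The multiplication-by-`x_i` operator on `K[x_1,…,x_n]`. -/
def xOp (n : ℕ) (i : Fin n) : Module.End K (MvPolynomial (Fin n) K) :=
  LinearMap.mulLeft K (MvPolynomial.X i)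

/-- The partial derivative operator `∂_i` on `K[x_1,…,x_n]`. -/
def dOp (n : ℕ) (i : Fin n) : Module.End K (MvPolynomial (Fin n) K) :=
  (MvPolynomial.pderiv i).toLinearMap

/-- The `n`-th Weyl algebra `A_n(K)`: the `K`-subalgebra of `End_K K[X]` generated by the
multiplication operators `x_1,…,x_n` and the derivations `∂_1,…,∂_n`. -/
def weylAlgebra (n : ℕ) : Subalgebra K (Module.End K (MvPolynomial (Fin n) K)) :=
  Algebra.adjoin K (Set.range (xOp K n) ∪ Set.range (dOp K n))

/-- A (multi-index pair for a) monomial `x^α ∂^β` of the Weyl algebra. -/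
abbrev Mon (n : ℕ) := (Fin n → ℕ) × (Fin n → ℕ)

/-- The operator `x^α ∂^β = x_1^{α_1}⋯x_n^{α_n} ∂_1^{β_1}⋯∂_n^{β_n}`. -/
def weylMonomial (n : ℕ) (α β : Fin n → ℕ) : Module.End K (MvPolynomial (Fin n) K) :=
  (((List.finRange n).map fun i => xOp K n i ^ α i).prod) *
    (((List.finRange n).map fun i => dOp K n i ^ β i).prod)

lemma weylMonomial_mem (n : ℕ) (α β : Fin n → ℕ) :
    weylMonomial K n α β ∈ weylAlgebra K n := by
  apply mul_mem
  · apply list_prod_mem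
    intro x hx
    simp only [List.mem_map] at hx
    obtain ⟨i, -, rfl⟩ := hx
    exact pow_mem (Algebra.subset_adjoin (Set.mem_union_left _ (Set.mem_range_self i))) _
  · apply list_prod_mem
    intro x hx
    simp only [List.mem_map] at hx
    obtain ⟨i, -, rfl⟩ := hx
    exact pow_mem (Algebra.subset_adjoin (Set.mem_union_right _ (Set.mem_range_self i))) _

/-- The monomial `x^α ∂^β` as an element of the Weyl algebra. -/
def wMon (n : ℕ) (θ : Mon n) : ↥(weylAlgebra K n) :=
  ⟨weylMonomial K n θ.1 θ.2, weylMonomial_mem K n θ.1 θ.2⟩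

/-- The degree `|α| + |β|` of the monomial `x^α ∂^β`. -/
def monDeg {n : ℕ} (θ : Mon n) : ℕ := (∑ i, θ.1 i) + (∑ i, θ.2 i)

/-! ### Order and divisibility on monomials -/

/-- Lexicographic order on tuples of natural numbers. -/
def vecLexLT {N : ℕ} (v w : Fin N → ℕ) : Prop :=
  ∃ i, (∀ j, j < i → v j = w j) ∧ v i < w i

/-- The order on monomials of the Weyl algebra: compare `(deg, α_1,…,α_n, β_1,…,β_n)`
lexicographically. -/
def monLT {n : ℕ} (θ θ' : Mon n) : Prop :=
  monDeg θ < monDeg θ' ∨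
    (monDeg θ = monDeg θ' ∧ vecLexLT (Fin.append θ.1 θ.2) (Fin.append θ'.1 θ'.2))

def monLE {n : ℕ} (θ θ' : Mon n) : Prop := monLT θ θ' ∨ θ = θ'

/-- `x^α ∂^β` divides `x^γ ∂^δ` iff `α ≤ γ` and `β ≤ δ` componentwise. -/
def monDvd {n : ℕ} (θ θ' : Mon n) : Prop := θ.1 ≤ θ'.1 ∧ θ.2 ≤ θ'.2

/-- The quotient monomial `θ'/θ`. -/
def monQuot {n : ℕ} (θ' θ : Mon n) : Mon n := (θ'.1 - θ.1, θ'.2 - θ.2)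

/-- The least common multiple of two monomials. -/
def monLcm {n : ℕ} (θ θ' : Mon n) : Mon n := (θ.1 ⊔ θ'.1, θ.2 ⊔ θ'.2)

/-! ### The free module `E` over the Weyl algebra -/

/-- A free `A_n`-module with free generators `e_1,…,e_m`, realized as `A_n^m`. -/
abbrev EMod (n m : ℕ) := Fin m → ↥(weylAlgebra K n)

instance (n : ℕ) : Ring ↥(weylAlgebra K n) := inferInstance

instance (n : ℕ) : Algebra K ↥(weylAlgebra K n) := inferInstance

instance (n m : ℕ) : AddCommGroup (EMod K n m) := inferInstance

instance (n m : ℕ) : Module ↥(weylAlgebra K n) (EMod K n m) := inferInstance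

instance (n m : ℕ) : Module K (EMod K n m) := inferInstance

/-- A monomial `θ e_i` of `E` is a pair `(θ, i)`. -/
abbrev EMon (n m : ℕ) := Mon n × Fin m

/-- The monomial `θ e_i` as an element of `E`. -/
def emon {n m : ℕ} (w : EMon n m) : EMod K n m := Pi.single w.2 (wMon K n w.1)

/-- The order on monomials of `E`: `θ e_i < θ' e_j` iff `θ < θ'`, or `θ = θ'` and `i < j`. -/
def emonLT {n m : ℕ} (w w' : EMon n m) : Prop :=
  monLT w.1 w'.1 ∨ (w.1 = w'.1 ∧ w.2 < w'.2)

def emonLE {n m : ℕ} (w w' : EMon n m) : Prop := emonLT w w' ∨ w = w'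

/-- `θ e_i` divides `θ' e_j` iff `i = j` and `θ` divides `θ'`. -/
def emonDvd {n m : ℕ} (w w' : EMon n m) : Prop := w.2 = w'.2 ∧ monDvd w.1 w'.1

/-- `c` is the coordinate representation of `f ∈ E` in the `K`-basis of monomials of `E`. -/
def IsRepr {n m : ℕ} (f : EMod K n m) (c : EMon n m →₀ K) : Prop :=
  f = c.sum fun w k => k • emon K w

/-- The monomial `w` appears in `f` (with a nonzero coefficient). -/
def appearsIn {n m : ℕ} (f : EMod K n m) (w : EMon n m) : Prop :=
  ∃ c, IsRepr K f c ∧ w ∈ c.support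

/-- `w` is the leading monomial of `f` and `a` its leading coefficient. -/
def IsLead {n m : ℕ} (f : EMod K n m) (w : EMon n m) (a : K) : Prop :=
  ∃ c, IsRepr K f c ∧ w ∈ c.support ∧
    (∀ w' ∈ c.support, w' ≠ w → emonLT w' w) ∧ a = c w

/-- `w` is the leading monomial of `f`. -/
def IsLM {n m : ℕ} (f : EMod K n m) (w : EMon n m) : Prop := ∃ a, IsLead K f w a

/-- `f` is reduced with respect to `G`: `f = 0` or no monomial appearing in `f` is a multiple
of the leading monomial of an element of `G`. -/
def ReducedWrt {n m : ℕ} (f : EMod K n m) (G : Set (EMod K n m)) : Prop :=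
  f = 0 ∨ ∀ w, appearsIn K f w → ∀ g ∈ G, ∀ wg, IsLM K g wg → ¬ emonDvd wg w

/-- `h` is the S-polynomial `S(f,g)`. -/
def IsSPoly {n m : ℕ} (f g h : EMod K n m) : Prop :=
  ∃ wf af wg ag, IsLead K f wf af ∧ IsLead K g wg ag ∧
    ((wf.2 ≠ wg.2 ∧ h = 0) ∨
      (wf.2 = wg.2 ∧
        h = af⁻¹ • (wMon K n (monQuot (monLcm wf.1 wg.1) wf.1) • f)
          - ag⁻¹ • (wMon K n (monQuot (monLcm wf.1 wg.1) wg.1) • g)))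

/-- One-step reduction of `f` to `h` modulo `g`. -/
def ReduceStep {n m : ℕ} (g f h : EMod K n m) : Prop :=
  g ≠ 0 ∧ ∃ c : EMon n m →₀ K, IsRepr K f c ∧ ∃ w ∈ c.support, ∃ wg ag,
    IsLead K g wg ag ∧ emonDvd wg w ∧
    h = f - (c w * ag⁻¹) • (wMon K n (monQuot w.1 wg.1) • g)

/-- `f` reduces to `h` modulo the set `G` (finitely many one-step reductions). -/
def ReducesTo {n m : ℕ} (G : Set (EMod K n m)) (f h : EMod K n m) : Prop :=
  Relation.ReflTransGen (fun x y => ∃ g ∈ G, ReduceStep K g x y) f h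

/-- `g_1,…,g_s` is a Gröbner basis of the submodule `N` of `E`. -/
def IsGroebnerBasis {n m s : ℕ} (g : Fin s → EMod K n m)
    (N : Submodule (weylAlgebra K n) (EMod K n m)) : Prop :=
  (∀ i, g i ≠ 0) ∧ (∀ i, g i ∈ N) ∧
    ∀ f ∈ N, f ≠ 0 → ∀ w, IsLM K f w → ∃ i wi, IsLM K (g i) wi ∧ emonDvd wi w

/-! ### Bernstein filtration and Bernstein polynomials -/

/-- The Bernstein filtration `B_r` of the Weyl algebra: the `K`-span of the monomials of
degree at most `r`. -/
def BernsteinFil (n r : ℕ) : Submodule K ↥(weylAlgebra K n) :=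
  Submodule.span K {D : ↥(weylAlgebra K n) | ∃ θ : Mon n, monDeg θ ≤ r ∧ D = wMon K n θ}

/-- The filtration `M_r = Σ_i B_r f_i` of a module `M` generated by `f_1,…,f_p`. -/
def modFil (n : ℕ) {M : Type*} [AddCommGroup M] [Module (weylAlgebra K n) M]
    [Module K M] [IsScalarTower K (weylAlgebra K n) M] {p : ℕ}
    (f : Fin p → M) (r : ℕ) : Submodule K M :=
  Submodule.span K {x : M | ∃ i, ∃ D ∈ BernsteinFil K n r, x = D • f i}

/-- `χ` is the Bernstein polynomial of `M` associated with the system of generators `f`. -/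
def IsBernsteinOf (n : ℕ) {M : Type*} [AddCommGroup M] [Module (weylAlgebra K n) M]
    [Module K M] [IsScalarTower K (weylAlgebra K n) M] {p : ℕ}
    (f : Fin p → M) (χ : Polynomial ℚ) : Prop :=
  Submodule.span (weylAlgebra K n) (Set.range f) = ⊤ ∧ Numerical χ ∧
    ∃ N0 : ℕ, ∀ r : ℕ, N0 ≤ r →
      χ.eval (r : ℚ) = (Module.finrank K (modFil K n f r) : ℚ)

/-- `d = δ(M)`: `d` is the coefficient `a_{2n}` in the canonical representation
`χ(t) = Σ a_i C(t+i,i)` of a Bernstein polynomial of `M`. -/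
def HasDelta (n : ℕ) (M : Type*) [AddCommGroup M] [Module (weylAlgebra K n) M]
    [Module K M] [IsScalarTower K (weylAlgebra K n) M] (d : ℤ) : Prop :=
  ∃ (p : ℕ) (f : Fin p → M) (χ : Polynomial ℚ) (a : Fin (2*n+1) → ℤ),
    IsBernsteinOf K n f χ ∧ (χ = ∑ i, (a i : ℚ) • binomPoly (i : ℕ)) ∧
    d = a (Fin.last (2*n))

/-- A filtration of an `A_n`-module `P` with respect to the Bernstein filtration. -/
def IsWeylFiltration (n : ℕ) (P : Type*) [AddCommGroup P] [Module (weylAlgebra K n) P]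
    [Module K P] [IsScalarTower K (weylAlgebra K n) P]
    (Γ : ℕ → Submodule K P) : Prop :=
  (∀ r, Γ r ≤ Γ (r+1)) ∧ (∀ r, FiniteDimensional K (Γ r)) ∧ (⨆ r, Γ r) = ⊤ ∧
    ∀ r s : ℕ, ∀ D ∈ BernsteinFil K n r, ∀ x ∈ Γ s, D • x ∈ Γ (r+s)

/-- A good filtration: moreover `B_r Γ_s = Γ_{r+s}` for all `s ≥ s₀` and all `r`. -/
def IsGoodFiltration (n : ℕ) (P : Type*) [AddCommGroup P] [Module (weylAlgebra K n) P]
    [Module K P] [IsScalarTower K (weylAlgebra K n) P]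
    (Γ : ℕ → Submodule K P) : Prop :=
  IsWeylFiltration K n P Γ ∧
    ∃ s₀ : ℕ, ∀ s : ℕ, s₀ ≤ s → ∀ r : ℕ,
      Γ (r+s) ≤ Submodule.span K {y : P | ∃ D ∈ BernsteinFil K n r, ∃ x ∈ Γ s, y = D • x}

/-- The defining properties of the mapping `μ_U : B_U → ℤ ∪ {∞}` (on pairs from `U`). -/
def MuSpec (n : ℕ) (M : Type*) [AddCommGroup M] [Module (weylAlgebra K n) M]
    (U : Set (Submodule (weylAlgebra K n) M))
    (μ : Submodule (weylAlgebra K n) M → Submodule (weylAlgebra K n) M → WithTop ℤ) :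
    Prop :=
  (∀ N N', N ∈ U → N' ∈ U → N' ≤ N → ((-1 : ℤ) : WithTop ℤ) ≤ μ N N') ∧
    ∀ N N', N ∈ U → N' ∈ U → N' ≤ N → ∀ d : ℕ,
      (((d : ℤ) : WithTop ℤ) ≤ μ N N' ↔
        (N ≠ N' ∧ ∃ c : ℕ → Submodule (weylAlgebra K n) M,
          (∀ i, c i ∈ U) ∧ c 0 ≤ N ∧ (∀ i, c (i+1) ≤ c i) ∧ (∀ i, N' ≤ c i) ∧
          ∀ i, (((d : ℤ) - 1 : ℤ) : WithTop ℤ) ≤ μ (c i) (c (i+1))))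


/-! ### Auxiliary combinatorial lemmas for Statement 3 -/

private lemma hockey_stick (m : ℕ) : ∀ s : ℕ,
    ∑ t ∈ Finset.range (s+1), (t+m).choose m = (s+m+1).choose (m+1) := by
  intro s
  induction s with
  | zero => simp
  | succ s ih =>
    rw [Finset.sum_range_succ, ih]
    have h1 : s+1+m = s+m+1 := by ring
    have h2 : s+1+m+1 = (s+m+1)+1 := by ring
    rw [h1, Nat.choose_succ_succ (s+m+1) m]
    exact add_comm _ _

/-- The finset of tuples `v : Fin m → ℕ` with `∑ v ≤ s`. -/
private def boxLe (m s : ℕ) : Finset (Fin m → ℕ) :=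
  (Fintype.piFinset fun _ => Finset.range (s+1)).filter fun v => ∑ j, v j ≤ s

private lemma mem_boxLe {m s : ℕ} {v : Fin m → ℕ} : v ∈ boxLe m s ↔ ∑ j, v j ≤ s := by
  simp only [boxLe, Finset.mem_filter, Fintype.mem_piFinset, Finset.mem_range]
  constructor
  · exact fun h => h.2
  · intro h
    refine ⟨fun j => lt_of_le_of_lt (le_trans ?_ h) (Nat.lt_succ_self s), h⟩
    exact Finset.single_le_sum (f := v) (fun i _ => Nat.zero_le _) (Finset.mem_univ j)

private lemma card_boxLe : ∀ (m s : ℕ), (boxLe m s).card = (s+m).choose m := by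
  intro m
  induction m with
  | zero =>
    intro s
    have h : boxLe 0 s = {fun _ => 0} := by
      ext v
      simp only [mem_boxLe, Finset.mem_singleton]
      constructor
      · intro _; exact funext fun j => j.elim0
      · intro _; simp
    rw [h, Finset.card_singleton, Nat.choose_zero_right]
  | succ m ih =>
    intro s
    have key : (boxLe (m+1) s).card
        = ((Finset.range (s+1)).sigma fun t => boxLe m (s - t)).card := by
      apply Finset.card_nbij' (i := fun v => ⟨v 0, Fin.tail v⟩)
        (j := fun w => Fin.cons w.1 w.2)
      · intro v hv
        rw [Finset.mem_coe, mem_boxLe, Fin.sum_univ_succ] at hv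
        simp only [Finset.mem_coe, Finset.mem_sigma, Finset.mem_range, mem_boxLe]
        have hsum : ∑ j, Fin.tail v j = ∑ i : Fin m, v i.succ := rfl
        rw [hsum]
        omega
      · intro w hw
        simp only [Finset.mem_coe, Finset.mem_sigma, Finset.mem_range, mem_boxLe] at hw
        rw [Finset.mem_coe, mem_boxLe, Fin.sum_univ_succ]
        have hsum : ∑ i : Fin m, (Fin.cons w.1 w.2 : Fin (m+1) → ℕ) i.succ = ∑ j, w.2 j := by
          refine Finset.sum_congr rfl fun i _ => ?_
          simp [Fin.cons_succ]
        beta_reduce; rw [Fin.cons_zero, hsum]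
        omega
      · intro v _; exact Fin.cons_self_tail v
      · intro w _
        cases w with
        | mk t f => simp [Fin.cons_zero, Fin.tail_cons]
    rw [key, Finset.card_sigma]
    have h1 : ∑ t ∈ Finset.range (s+1), (boxLe m (s - t)).card
        = ∑ t ∈ Finset.range (s+1), ((s - t) + m).choose m :=
      Finset.sum_congr rfl fun t _ => ih (s - t)
    have h2 := Finset.sum_range_reflect (fun t => (t+m).choose m) (s+1)
    simp only [Nat.succ_sub_one] at h2
    rw [h1, h2, hockey_stick m s]
    congr 1

private lemma card_shift (m s : ℕ) (c : Fin m → ℕ) (hb : ∑ j, c j ≤ s) :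
    ((boxLe m s).filter fun v => ∀ j, c j ≤ v j).card = (s - ∑ j, c j + m).choose m := by
  rw [← card_boxLe m (s - ∑ j, c j)]
  apply Finset.card_nbij' (i := fun v j => v j - c j) (j := fun w j => w j + c j)
  · intro v hv
    rw [Finset.mem_coe, Finset.mem_filter, mem_boxLe] at hv
    obtain ⟨hv1, hv2⟩ := hv
    rw [Finset.mem_coe, mem_boxLe]
    rw [Finset.sum_tsub_distrib _ (fun j _ => hv2 j)]
    exact Nat.sub_le_sub_right hv1 _
  · intro w hw
    rw [Finset.mem_coe, mem_boxLe] at hw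
    rw [Finset.mem_coe, Finset.mem_filter, mem_boxLe]
    constructor
    · rw [Finset.sum_add_distrib]
      omega
    · intro j; exact Nat.le_add_left _ _
  · intro v hv
    rw [Finset.mem_coe, Finset.mem_filter] at hv
    exact funext fun j => Nat.sub_add_cancel (hv.2 j)
  · intro w _
    funext j
    simp

private lemma prod_sub_cast (n : ℕ) : ∀ N : ℕ, n ≤ N →
    ∏ k ∈ Finset.range n, ((N:ℚ) - k) = (N.descFactorial n : ℚ) := by
  induction n with
  | zero => intro N _; simp
  | succ n ih =>
    intro N h
    rw [Finset.prod_range_succ, ih N (Nat.le_of_succ_le h), Nat.descFactorial_succ]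
    have hsub : ((N - n : ℕ) : ℚ) = (N:ℚ) - n := Nat.cast_sub (Nat.le_of_succ_le h)
    rw [Nat.cast_mul, hsub]
    ring

private lemma eval_genBinomPoly (m b s : ℕ) (hb : b ≤ s) :
    (genBinomPoly ((m:ℤ) - (b:ℤ)) m).eval (s:ℚ) = ((s - b + m).choose m : ℚ) := by
  rw [genBinomPoly, Polynomial.eval_smul, Polynomial.eval_prod, smul_eq_mul]
  have hterm : ∀ k ∈ Finset.range m,
      (Polynomial.X + Polynomial.C ((((m:ℤ) - (b:ℤ) : ℤ) : ℚ) - (k:ℚ))).eval (s:ℚ)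
        = ((s - b + m : ℕ) : ℚ) - (k:ℚ) := by
    intro k _
    have hcast : ((s - b + m : ℕ) : ℚ) = (s:ℚ) - b + m := by
      rw [Nat.cast_add, Nat.cast_sub hb]
    rw [Polynomial.eval_add, Polynomial.eval_X, Polynomial.eval_C, hcast]
    push_cast
    ring
  rw [Finset.prod_congr rfl hterm, prod_sub_cast m (s - b + m) (Nat.le_add_left m _),
    Nat.descFactorial_eq_factorial_mul_choose, Nat.cast_mul, ← mul_assoc,
    inv_mul_cancel₀ (by exact_mod_cast Nat.factorial_ne_zero m), one_mul]

/-- Explicit formula for the Kolchin dimension polynomial of a finite set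
`A = {a_1,…,a_p} ⊆ ℕ^m`: for all sufficiently large `s`,
`Card V_A(s) = Σ_{ℓ=0}^p (−1)^ℓ Σ_{λ ∈ Λ(ℓ,p)} C(s + m − b_λ, m)`,
where `b_λ = Σ_{j=1}^m max{a_{ij} : i ∈ λ}`. -/
theorem kolchin_polynomial_formula (m p : ℕ) (a : Fin p → Fin m → ℕ)
    (hinj : Function.Injective a) :
    ∃ N0 : ℕ, ∀ s : ℕ, N0 ≤ s →
      (Set.ncard {v : Fin m → ℕ | (∀ i, ¬ a i ≤ v) ∧ (∑ j, v j) ≤ s} : ℚ) =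
        Polynomial.eval (s : ℚ)
          (∑ l ∈ Finset.range (p+1), (-1 : ℚ)^l •
            ∑ lam ∈ Finset.powersetCard l (Finset.univ : Finset (Fin p)),
              genBinomPoly ((m : ℤ) - ∑ j, ((lam.sup fun i => a i j : ℕ) : ℤ)) m) := by
  classical
  refine ⟨∑ j, ∑ i, a i j, fun s hs => ?_⟩
  have hble : ∀ lam : Finset (Fin p), (∑ j, lam.sup fun i => a i j) ≤ s := by
    intro lam
    refine le_trans (le_trans (Finset.sum_le_sum fun j _ => ?_) le_rfl) hs
    exact Finset.sup_le fun i _ =>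
      Finset.single_le_sum (f := fun i => a i j) (fun i _ => Nat.zero_le _) (Finset.mem_univ i)
  -- the left-hand side as a finset cardinality
  have hset : {v : Fin m → ℕ | (∀ i, ¬ a i ≤ v) ∧ (∑ j, v j) ≤ s}
      = ↑((boxLe m s).filter fun v => ∀ i, ¬ a i ≤ v) := by
    ext v
    simp only [Set.mem_setOf_eq, Finset.coe_filter, Set.mem_setOf_eq, mem_boxLe]
    tauto
  rw [hset, Set.ncard_coe_finset]
  -- common middle expression
  set T : ℚ := ∑ lam ∈ (Finset.univ : Finset (Fin p)).powerset,
      (-1:ℚ)^lam.card * (((s - (∑ j, lam.sup fun i => a i j) + m).choose m : ℕ) : ℚ) with hT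
  -- the right-hand side equals T
  have hRHS : Polynomial.eval (s : ℚ)
      (∑ l ∈ Finset.range (p+1), (-1 : ℚ)^l •
        ∑ lam ∈ Finset.powersetCard l (Finset.univ : Finset (Fin p)),
          genBinomPoly ((m : ℤ) - ∑ j, ((lam.sup fun i => a i j : ℕ) : ℤ)) m) = T := by
    rw [Polynomial.eval_finset_sum]
    have hstep : ∀ l ∈ Finset.range (p+1),
        Polynomial.eval (s:ℚ) ((-1 : ℚ)^l •
          ∑ lam ∈ Finset.powersetCard l (Finset.univ : Finset (Fin p)),
            genBinomPoly ((m : ℤ) - ∑ j, ((lam.sup fun i => a i j : ℕ) : ℤ)) m)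
        = ∑ lam ∈ Finset.powersetCard l (Finset.univ : Finset (Fin p)),
            (-1:ℚ)^lam.card * (((s - (∑ j, lam.sup fun i => a i j) + m).choose m : ℕ) : ℚ) := by
      intro l _
      rw [Polynomial.eval_smul, smul_eq_mul, Polynomial.eval_finset_sum, Finset.mul_sum]
      refine Finset.sum_congr rfl fun lam hlam => ?_
      rw [(Finset.mem_powersetCard.mp hlam).2]
      congr 1
      have hc : ((m : ℤ) - ∑ j, ((lam.sup fun i => a i j : ℕ) : ℤ))
          = (m:ℤ) - (((∑ j, lam.sup fun i => a i j : ℕ)) : ℤ) := by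
        push_cast; ring
      rw [hc, eval_genBinomPoly m _ s (hble lam)]
    rw [Finset.sum_congr rfl hstep, hT, Finset.powerset_card_disjiUnion]; erw [Finset.sum_disjiUnion]
    congr 1
    rw [Finset.card_univ, Fintype.card_fin]
  rw [hRHS]
  -- inclusion-exclusion: the cardinality equals T
  have hcard : ∀ lam : Finset (Fin p),
      (((s - (∑ j, lam.sup fun i => a i j) + m).choose m : ℕ) : ℚ)
        = ∑ v ∈ boxLe m s, (if ∀ j, (lam.sup fun i => a i j) ≤ v j then (1:ℚ) else 0) := by
    intro lam
    rw [Finset.sum_boole, ← card_shift m s _ (hble lam)]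
  have hinner : ∀ v : Fin m → ℕ,
      (∑ lam ∈ (Finset.univ : Finset (Fin p)).powerset,
        (-1:ℚ)^lam.card * (if ∀ j, (lam.sup fun i => a i j) ≤ v j then (1:ℚ) else 0))
      = if ∀ i, ¬ a i ≤ v then (1:ℚ) else 0 := by
    intro v
    have hiff : ∀ lam : Finset (Fin p),
        (∀ j, (lam.sup fun i => a i j) ≤ v j)
          ↔ lam ⊆ Finset.univ.filter (fun i => a i ≤ v) := by
      intro lam
      constructor
      · intro h i hi
        rw [Finset.mem_filter]
        refine ⟨Finset.mem_univ i, fun j => ?_⟩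
        exact le_trans (Finset.le_sup (f := fun i => a i j) hi) (h j)
      · intro h j
        exact Finset.sup_le fun i hi => (Finset.mem_filter.mp (h hi)).2 j
    have hpow : ∀ x : Finset (Fin p),
        (∑ t ∈ x.powerset, (-1:ℚ)^t.card) = if x = ∅ then 1 else 0 := by
      intro x
      have h := Finset.sum_powerset_neg_one_pow_card (x := x)
      have hcast : (∑ t ∈ x.powerset, (-1:ℚ)^t.card)
          = (((∑ t ∈ x.powerset, (-1:ℤ)^t.card) : ℤ) : ℚ) := by push_cast; rfl
      rw [hcast, h]
      split <;> simp
    simp only [mul_ite, mul_one, mul_zero, hiff]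
    rw [← Finset.sum_filter]
    have hfe : ((Finset.univ : Finset (Fin p)).powerset.filter
          fun lam => lam ⊆ Finset.univ.filter (fun i => a i ≤ v))
        = (Finset.univ.filter (fun i => a i ≤ v)).powerset := by
      ext t
      simp [Finset.mem_powerset, Finset.subset_univ]
    rw [hfe, hpow]
    have hempty : (Finset.univ.filter (fun i => a i ≤ v) = ∅) ↔ (∀ i, ¬ a i ≤ v) := by
      simp [Finset.filter_eq_empty_iff]
    exact if_congr hempty rfl rfl
  have hLHS : T = ((((boxLe m s).filter fun v => ∀ i, ¬ a i ≤ v).card : ℕ) : ℚ) := by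
    rw [hT]
    calc ∑ lam ∈ (Finset.univ : Finset (Fin p)).powerset,
          (-1:ℚ)^lam.card * (((s - (∑ j, lam.sup fun i => a i j) + m).choose m : ℕ) : ℚ)
        = ∑ lam ∈ (Finset.univ : Finset (Fin p)).powerset, ∑ v ∈ boxLe m s,
            (-1:ℚ)^lam.card * (if ∀ j, (lam.sup fun i => a i j) ≤ v j then (1:ℚ) else 0) := by
          refine Finset.sum_congr rfl fun lam _ => ?_
          rw [hcard lam, Finset.mul_sum]
      _ = ∑ v ∈ boxLe m s, ∑ lam ∈ (Finset.univ : Finset (Fin p)).powerset,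
            (-1:ℚ)^lam.card * (if ∀ j, (lam.sup fun i => a i j) ≤ v j then (1:ℚ) else 0) :=
          Finset.sum_comm
      _ = ∑ v ∈ boxLe m s, (if ∀ i, ¬ a i ≤ v then (1:ℚ) else 0) :=
          Finset.sum_congr rfl fun v _ => hinner v
      _ = _ := Finset.sum_boole _ _
  exact hLHS.symm


end
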